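/- Let μ be a locally finite Borel measure on ℝ^d, let C ≥ 1, and let {λ_Q}_{Q∈𝒟} be non-negative reals indexed by the collection 𝒟 of dyadic cubes of ℝ^d satisfying the usual Carleson condition: for every dyadic cube R ∈ 𝒟, ∑_{Q∈𝒟 : Q⊆R} λ_Q ≤ C · μ(R). Then for every subcollection 𝒟′ ⊆ 𝒟, ∑_{Q∈𝒟′} λ_Q ≤ C · μ(⋃_{Q∈𝒟′} Q). -/

import Mathlib

open MeasureTheory Set
open scoped NNReal ENNReal

/-- A dyadic cube of `ℝ^d` is a set of the form `2^{-k}([0,1)^d + m)`, i.e. the product of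
the half-open intervals `[2^{-k} m_j, 2^{-k}(m_j + 1))` for `j = 1, …, d`. -/
def IsDyadicCube {d : ℕ} (Q : Set (Fin d → ℝ)) : Prop :=
  ∃ (k : ℤ) (m : Fin d → ℤ), Q = Set.univ.pi fun j =>
    Set.Ico ((2 : ℝ) ^ (-k) * (m j : ℝ)) ((2 : ℝ) ^ (-k) * ((m j : ℝ) + 1))

lemma mem_dyIco (k m : ℤ) (x : ℝ) :
    x ∈ Set.Ico ((2:ℝ)^(-k) * m) ((2:ℝ)^(-k) * (m+1)) ↔
      (m:ℝ) ≤ 2^k * x ∧ (2:ℝ)^k * x < m+1 := by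
  have hp : (0:ℝ) < 2 ^ k := by positivity
  rw [Set.mem_Ico, zpow_neg, inv_mul_le_iff₀ hp, lt_inv_mul_iff₀ hp]

lemma dyIco_subset {k k' m m' : ℤ} (h : k ≤ k')
    (hx : ∃ x : ℝ, x ∈ Set.Ico ((2:ℝ)^(-k') * m') ((2:ℝ)^(-k') * (m'+1)) ∩
      Set.Ico ((2:ℝ)^(-k) * m) ((2:ℝ)^(-k) * (m+1))) :
    Set.Ico ((2:ℝ)^(-k') * m') ((2:ℝ)^(-k') * (m'+1)) ⊆
      Set.Ico ((2:ℝ)^(-k) * m) ((2:ℝ)^(-k) * (m+1)) := by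
  obtain ⟨x, hx', hxk⟩ := hx
  rw [mem_dyIco] at hx' hxk
  set e : ℕ := (k' - k).toNat with he
  have hke : k' = k + e := by omega
  set N : ℤ := 2 ^ e with hN
  have hNR : ((N : ℤ) : ℝ) = (2:ℝ) ^ (e:ℤ) := by rw [hN]; push_cast; rw [zpow_natCast]
  have hsplit : (2:ℝ)^k' * x = (2:ℝ)^k * x * N := by
    rw [hke, zpow_add₀ (by norm_num : (2:ℝ) ≠ 0)]
    rw [hNR]; ring
  have hNpos : (0:ℤ) < N := by positivity
  have hNRpos : (0:ℝ) < (N:ℝ) := by exact_mod_cast hNpos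
  -- integer inequalities
  have h1 : m * N ≤ m' := by
    have : (m:ℝ) * N < m' + 1 := by
      calc (m:ℝ) * N ≤ (2:ℝ)^k * x * N := by nlinarith [hxk.1]
      _ = (2:ℝ)^k' * x := hsplit.symm
      _ < m' + 1 := hx'.2
    exact_mod_cast Int.lt_add_one_iff.mp (by exact_mod_cast this)
  have h2 : m' + 1 ≤ (m + 1) * N := by
    have : (m':ℝ) < (m+1) * N := by
      calc (m':ℝ) ≤ (2:ℝ)^k' * x := hx'.1
      _ = (2:ℝ)^k * x * N := hsplit
      _ < (m+1) * N := by nlinarith [hxk.2]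
    exact_mod_cast this
  intro y hy
  rw [mem_dyIco] at hy ⊢
  have hysplit : (2:ℝ)^k' * y = (2:ℝ)^k * y * N := by
    rw [hke, zpow_add₀ (by norm_num : (2:ℝ) ≠ 0)]; rw [hNR]; ring
  have h1R : (m:ℝ) * N ≤ m' := by exact_mod_cast h1
  have h2R : (m':ℝ) + 1 ≤ (m + 1) * N := by exact_mod_cast h2
  constructor
  · have : (m:ℝ) * N ≤ (2:ℝ)^k * y * N := by
      calc (m:ℝ) * N ≤ (m':ℝ) := h1R
      _ ≤ (2:ℝ)^k' * y := hy.1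
      _ = _ := hysplit
    nlinarith
  · have : (2:ℝ)^k * y * N < ((m:ℝ)+1) * N := by
      calc (2:ℝ)^k * y * N = (2:ℝ)^k' * y := hysplit.symm
      _ < m' + 1 := hy.2
      _ ≤ _ := h2R
    nlinarith

lemma dyadic_nested {d : ℕ} {Q R : Set (Fin d → ℝ)} (hQ : IsDyadicCube Q)
    (hR : IsDyadicCube R) (h : (Q ∩ R).Nonempty) : Q ⊆ R ∨ R ⊆ Q := by
  obtain ⟨k, m, rfl⟩ := hQ
  obtain ⟨k', m', rfl⟩ := hR
  obtain ⟨x, hxQ, hxR⟩ := h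
  rcases le_total k' k with hk | hk
  · left
    intro y hy j _
    exact dyIco_subset hk ⟨x j, hxQ j (mem_univ j), hxR j (mem_univ j)⟩ (hy j (mem_univ j))
  · right
    intro y hy j _
    exact dyIco_subset hk ⟨x j, hxR j (mem_univ j), hxQ j (mem_univ j)⟩ (hy j (mem_univ j))

lemma dyadic_measurableSet {d : ℕ} {Q : Set (Fin d → ℝ)} (hQ : IsDyadicCube Q) :
    MeasurableSet Q := by
  obtain ⟨k, m, rfl⟩ := hQ
  exact MeasurableSet.univ_pi fun j => measurableSet_Ico

/-- If non-negative coefficients indexed by the dyadic cubes of `ℝ^d`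
satisfy the usual Carleson condition `∑_{Q ⊆ R} λ_Q ≤ C μ(R)` for every dyadic cube `R`,
then `∑_{Q ∈ 𝒟'} λ_Q ≤ C μ(⋃_{Q ∈ 𝒟'} Q)` for every subcollection `𝒟'` of dyadic cubes. -/
theorem dyadic_carleson_of_usual_carleson {d : ℕ} (μ : Measure (Fin d → ℝ))
    [IsLocallyFiniteMeasure μ]
    (C : ℝ≥0) (hC : 1 ≤ C)
    (lam : {Q : Set (Fin d → ℝ) // IsDyadicCube Q} → ℝ≥0)
    (husual : ∀ R : {Q : Set (Fin d → ℝ) // IsDyadicCube Q},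
      ∑' Q : {Q : {Q : Set (Fin d → ℝ) // IsDyadicCube Q} // Q.1 ⊆ R.1},
        (lam Q.1 : ℝ≥0∞) ≤ (C : ℝ≥0∞) * μ R.1) :
    ∀ T : Set {Q : Set (Fin d → ℝ) // IsDyadicCube Q},
      ∑' Q : T, (lam Q : ℝ≥0∞) ≤ (C : ℝ≥0∞) * μ (⋃ Q ∈ T, Q.1) := by
  classical
  intro T
  rw [ENNReal.tsum_eq_iSup_sum]
  refine iSup_le fun F => ?_
  set G : Finset {Q : Set (Fin d → ℝ) // IsDyadicCube Q} := F.image Subtype.val with hG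
  have hsumFG : ∑ Q ∈ F, ((lam Q : ℝ≥0∞)) = ∑ Q ∈ G, (lam Q : ℝ≥0∞) := by
    rw [hG, Finset.sum_image (fun x _ y _ h => Subtype.ext h)]
  have hGT : ∀ Q ∈ G, (Q : {Q : Set (Fin d → ℝ) // IsDyadicCube Q}) ∈ T := by
    intro Q hQ
    rw [hG, Finset.mem_image] at hQ
    obtain ⟨q, _, rfl⟩ := hQ
    exact q.2
  set M : Finset {Q : Set (Fin d → ℝ) // IsDyadicCube Q} := G.filter (fun R => ∀ R' ∈ G, R.1 ⊆ R'.1 → R = R') with hM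
  have hmax : ∀ Q ∈ G, ∃ R ∈ M, Q.1 ⊆ R.1 := by
    intro Q hQ
    obtain ⟨R, hRmem, hRmax⟩ := Set.Finite.exists_maximalFor (fun R : {Q : Set (Fin d → ℝ) // IsDyadicCube Q} => R.1)
      {R | R ∈ G ∧ Q.1 ⊆ R.1} (G.finite_toSet.subset (fun R hR => hR.1))
      ⟨Q, hQ, subset_rfl⟩
    refine ⟨R, ?_, hRmem.2⟩
    rw [hM, Finset.mem_filter]
    exact ⟨hRmem.1, fun R' hR' hsub => Subtype.ext (hsub.antisymm (hRmax ⟨hR', hRmem.2.trans hsub⟩ hsub))⟩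
  choose! f hfM hfsub using hmax
  have hdisj : (↑M : Set {Q : Set (Fin d → ℝ) // IsDyadicCube Q}).PairwiseDisjoint (fun R : {Q : Set (Fin d → ℝ) // IsDyadicCube Q} => R.1) := by
    intro R hR R' hR' hne'
    rw [Function.onFun, Set.disjoint_iff_inter_eq_empty]
    by_contra hcon
    have hnonempty : (R.1 ∩ R'.1).Nonempty := Set.nonempty_iff_ne_empty.mpr hcon
    have hRf := Finset.mem_filter.mp (Finset.mem_coe.mp hR)
    have hRf' := Finset.mem_filter.mp (Finset.mem_coe.mp hR')
    rcases dyadic_nested R.2 R'.2 hnonempty with hsub | hsub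
    · exact hne' (hRf.2 R' hRf'.1 hsub)
    · exact hne' ((hRf'.2 R hRf.1 hsub).symm)
  calc ∑ Q ∈ F, ((lam Q : ℝ≥0∞)) = ∑ Q ∈ G, (lam Q : ℝ≥0∞) := hsumFG
    _ = ∑ R ∈ M, ∑ Q ∈ G.filter (fun Q => f Q = R), (lam Q : ℝ≥0∞) :=
        (Finset.sum_fiberwise_of_maps_to (fun Q hQ => hfM Q hQ) _).symm
    _ ≤ ∑ R ∈ M, (C : ℝ≥0∞) * μ R.1 := by
        refine Finset.sum_le_sum fun R hR => ?_
        have key : ∀ Q ∈ G.filter (fun Q => f Q = R), Q.1 ⊆ R.1 := by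
          intro Q hQ
          rw [Finset.mem_filter] at hQ
          rw [← hQ.2]
          exact hfsub Q hQ.1
        refine le_trans ?_ (husual R)
        set s : Finset {Q : {Q : Set (Fin d → ℝ) // IsDyadicCube Q} // Q.1 ⊆ R.1} :=
          (G.filter (fun Q => f Q = R)).attach.image
            (fun Q => (⟨Q.1, key Q.1 Q.2⟩ : {Q : {Q : Set (Fin d → ℝ) // IsDyadicCube Q} // Q.1 ⊆ R.1})) with hs
        have hinj : ∀ x ∈ (G.filter (fun Q => f Q = R)).attach,
            ∀ y ∈ (G.filter (fun Q => f Q = R)).attach,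
            (⟨x.1, key x.1 x.2⟩ : {Q : {Q : Set (Fin d → ℝ) // IsDyadicCube Q} // Q.1 ⊆ R.1})
              = ⟨y.1, key y.1 y.2⟩ → x = y := by
          intro x _ y _ h
          exact Subtype.ext (Subtype.mk_eq_mk.mp h)
        calc ∑ Q ∈ G.filter (fun Q => f Q = R), (lam Q : ℝ≥0∞)
            = ∑ Q ∈ (G.filter (fun Q => f Q = R)).attach, (lam Q.1 : ℝ≥0∞) :=
              (Finset.sum_attach _ _).symm
          _ = ∑ Q ∈ s, (lam Q.1 : ℝ≥0∞) := (Finset.sum_image (f := fun Q : {Q : {Q : Set (Fin d → ℝ) // IsDyadicCube Q} // Q.1 ⊆ R.1} => (lam Q.1 : ℝ≥0∞)) hinj).symm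
          _ ≤ _ := ENNReal.sum_le_tsum s
    _ = (C : ℝ≥0∞) * ∑ R ∈ M, μ R.1 := by rw [Finset.mul_sum]
    _ = (C : ℝ≥0∞) * μ (⋃ R ∈ M, R.1) := by
        rw [measure_biUnion_finset hdisj (fun R _ => dyadic_measurableSet R.2)]
    _ ≤ (C : ℝ≥0∞) * μ (⋃ Q ∈ T, Q.1) := by
        refine mul_le_mul_right (measure_mono ?_) _
        refine Set.iUnion₂_subset fun R hR => ?_
        exact Set.subset_biUnion_of_mem (hGT R (Finset.mem_filter.mp hR).1)
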